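/- Let (p_n)_{n ≥ 0} be a sequence of polynomial functions on a commutative ring R with p_0 = 1, satisfying the binomial-type identity p_n(u+v) = Σ_{i=0}^{n} C(n,i) p_i(u) p_{n−i}(v) for all u, v ∈ R and all n (the degree of p_n is not assumed to be n). Given a grid Z = (z_0, z_1, …) in R, define t_0(x;Z) = 1 and t_n(x;Z) = p_n(x) − Σ_{i=0}^{n−1} C(n,i) p_{n−i}(z_i) t_i(x;Z). Then for every η ∈ R, every x ∈ R, and every n ≥ 0, t_n(x+η; Z+η) = t_n(x; Z), where Z+η = (z_0+η, z_1+η, z_2+η, …). (Theorem 4.6, shift invariance of generalized Gončarov polynomials.) -/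

import Mathlib

open Finset

variable {R : Type*} [CommRing R]

/-- The generalized Gončarov polynomials associated with the sequence `p` and the grid `Z`,
via the recurrence `t_n(x; Z) = p_n(x) - ∑_{i<n} C(n,i) p_{n-i}(z_i) t_i(x; Z)`
(with `t_0 = p_0 = 1`). -/
noncomputable def gonc {S : Type*} [CommRing S] (p : ℕ → S → S) (Z : ℕ → S) (n : ℕ) (x : S) : S :=
  p n x - ∑ i ∈ (Finset.range n).attach,
    (n.choose i.1 : S) * p (n - i.1) (Z i.1) * gonc p Z i.1 x
termination_by n
decreasing_by exact Finset.mem_range.mp i.2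

lemma gonc_eq {S : Type*} [CommRing S] (q : ℕ → S → S) (Z : ℕ → S) (n : ℕ) (x : S) :
    gonc q Z n x
      = q n x - ∑ i ∈ Finset.range n, (n.choose i : S) * q (n - i) (Z i) * gonc q Z i x := by
  rw [gonc]
  congr 1
  exact Finset.sum_attach (Finset.range n) (fun i => (n.choose i : S) * q (n - i) (Z i) * gonc q Z i x)

lemma gonc_expand {S : Type*} [CommRing S] (q : ℕ → S → S) (Z : ℕ → S)
    (hq0 : ∀ y, q 0 y = 1) (n : ℕ) (x : S) :
    q n x = ∑ i ∈ Finset.range (n + 1), (n.choose i : S) * q (n - i) (Z i) * gonc q Z i x := by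
  rw [Finset.sum_range_succ, Nat.choose_self, Nat.sub_self, hq0, gonc_eq]
  push_cast
  ring

lemma tri_swap {S : Type*} [AddCommMonoid S] (n : ℕ) (f : ℕ → ℕ → S) :
    ∑ j ∈ Finset.range (n + 1), ∑ i ∈ Finset.range (j + 1), f i j
      = ∑ i ∈ Finset.range (n + 1), ∑ k ∈ Finset.range (n - i + 1), f i (i + k) := by
  have h := Finset.sum_Ico_Ico_comm 0 (n + 1) f
  simp only [← Finset.range_eq_Ico] at h
  rw [← h]
  refine Finset.sum_congr rfl fun i hi => ?_
  rw [Finset.range_eq_Ico, Finset.sum_Ico_eq_sum_range]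
  have hi' : i ≤ n := Nat.lt_succ_iff.mp (Finset.mem_range.mp hi)
  have h2 : n + 1 - i = n - i + 1 := by omega
  rw [h2, ← Finset.range_eq_Ico]

/-- Theorem 4.6 (shift invariance): if `(p_n)` is a sequence of polynomial functions on a
commutative ring `R` with `p_0 = 1` satisfying the binomial-type identity (the degree of
`p_n` need not be `n`), then the Gončarov polynomials defined by the recurrence satisfy
`t_n(x + η; Z + η) = t_n(x; Z)` for all `η, x ∈ R` and all `n`. -/
theorem goncarov_shift_invariant (p : ℕ → Polynomial R)
    (hp0 : ∀ x : R, (p 0).eval x = 1)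
    (hbin : ∀ (n : ℕ) (u v : R),
      (p n).eval (u + v)
        = ∑ i ∈ Finset.range (n + 1), (n.choose i : R) * (p i).eval u * (p (n - i)).eval v)
    (Z : ℕ → R) (η : R) (x : R) (n : ℕ) :
    gonc (fun m t => (p m).eval t) (fun i => Z i + η) n (x + η)
      = gonc (fun m t => (p m).eval t) Z n x := by

  induction n using Nat.strong_induction_on with
  | _ n IH =>
  set q : ℕ → R → R := fun m t => (p m).eval t with hq
  set t : ℕ → R := fun i => gonc q Z i x with ht
  rw [gonc_eq]
  have hsum : ∑ i ∈ Finset.range n,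
      (n.choose i : R) * q (n - i) (Z i + η) * gonc q (fun i => Z i + η) i (x + η)
      = ∑ i ∈ Finset.range n, ∑ k ∈ Finset.range (n - i + 1),
          (n.choose i : R) * ((n - i).choose k : R) * q k (Z i) * q (n - i - k) η * t i := by
    refine Finset.sum_congr rfl fun i hi => ?_
    rw [IH i (Finset.mem_range.mp hi)]
    show (n.choose i : R) * (p (n - i)).eval (Z i + η) * t i = _
    rw [hbin (n - i) (Z i) η, Finset.mul_sum, Finset.sum_mul]
    refine Finset.sum_congr rfl fun k hk => ?_
    show _ = (n.choose i : R) * ((n - i).choose k : R) * (p k).eval (Z i) * (p (n - i - k)).eval η * t i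
    ring
  rw [hsum]
  show (p n).eval (x + η) - _ = _
  rw [hbin n x η]
  have expand : ∀ j, (p j).eval x = ∑ i ∈ Finset.range (j + 1),
      (j.choose i : R) * q (j - i) (Z i) * t i :=
    fun j => gonc_expand q Z (fun y => hp0 y) j x
  have hmain : ∑ j ∈ Finset.range (n + 1), (n.choose j : R) * (p j).eval x * (p (n - j)).eval η
      = ∑ i ∈ Finset.range (n + 1), ∑ k ∈ Finset.range (n - i + 1),
          (n.choose i : R) * ((n - i).choose k : R) * q k (Z i) * q (n - i - k) η * t i := by
    have step1 : ∑ j ∈ Finset.range (n + 1), (n.choose j : R) * (p j).eval x * (p (n - j)).eval η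
        = ∑ j ∈ Finset.range (n + 1), ∑ i ∈ Finset.range (j + 1),
            ((n.choose j * j.choose i : ℕ) : R) * q (j - i) (Z i) * q (n - j) η * t i := by
      refine Finset.sum_congr rfl fun j hj => ?_
      rw [expand j, Finset.mul_sum, Finset.sum_mul]
      refine Finset.sum_congr rfl fun i hi => ?_
      push_cast
      ring
    rw [step1, tri_swap n (fun i j => ((n.choose j * j.choose i : ℕ) : R) * q (j - i) (Z i) * q (n - j) η * t i)]
    refine Finset.sum_congr rfl fun i hi => Finset.sum_congr rfl fun k hk => ?_
    have hi' : i ≤ n := Nat.lt_succ_iff.mp (Finset.mem_range.mp hi)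
    have hk' : k ≤ n - i := Nat.lt_succ_iff.mp (Finset.mem_range.mp hk)
    have h1 : n.choose (i + k) * (i + k).choose i = n.choose i * (n - i).choose k := by
      have hik : i + k - i = k := by omega
      rw [Nat.choose_mul (by omega), hik]
    have h2 : i + k - i = k := by omega
    have h3 : n - (i + k) = n - i - k := by omega
    rw [h1, h2, h3]
    push_cast
    ring
  rw [hmain, Finset.sum_range_succ]
  have hlast : ∑ k ∈ Finset.range (n - n + 1),
      (n.choose n : R) * ((n - n).choose k : R) * q k (Z n) * q (n - n - k) η * t n = t n := by
    simp [Nat.sub_self, hq, hp0]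
  rw [hlast]
  ring
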